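/- Let P : ℤ → ℝ² satisfy: for all i ≥ N, the triples (Pᵢ, Pᵢ₊₁, Pᵢ₊₂) and (Pᵢ, Pᵢ₊₁, Pᵢ₊ₖ) are positively oriented and Pᵢ₊ₖ₊₁ lies in the interior of triangle (Pᵢ, Pᵢ₊₁, Pᵢ₊ₖ) (type-β spiral condition with k ≥ 3). Then for all i > N, the triple (Pᵢ₊₂ₖ, Pᵢ₊ₖ, Pᵢ) is positively oriented. -/
import Mathlib


def det2 (u v : ℝ × ℝ) : ℝ := u.1 * v.2 - u.2 * v.1

def ori (A B C : ℝ × ℝ) : ℝ := det2 (B - A) (C - B)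

def inTriangle (A B C W : ℝ × ℝ) : Prop :=
  ∃ l₁ l₂ l₃ : ℝ, l₁ ∈ Set.Ioo (0:ℝ) 1 ∧ l₂ ∈ Set.Ioo (0:ℝ) 1 ∧
    l₃ ∈ Set.Ioo (0:ℝ) 1 ∧ l₁ + l₂ + l₃ = 1 ∧ W = l₁ • A + l₂ • B + l₃ • C

lemma ori_coords (A B C : ℝ × ℝ) :
    ori A B C = (B.1 - A.1) * (C.2 - B.2) - (B.2 - A.2) * (C.1 - B.1) := by
  simp [ori, det2]

lemma ori_affine (X Y A B C : ℝ × ℝ) (l₁ l₃ : ℝ) :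
    ori X Y (l₁ • A + (1 - l₁ - l₃) • B + l₃ • C)
      = l₁ * ori X Y A + (1 - l₁ - l₃) * ori X Y B + l₃ * ori X Y C := by
  simp only [ori_coords, Prod.fst_add, Prod.snd_add, Prod.smul_fst, Prod.smul_snd,
    smul_eq_mul]
  ring

/-- The 2D Grassmann–Plücker identity specialized to lines through `V`. -/
lemma ori_plucker (A B U V W : ℝ × ℝ) :
    ori A V U * ori V B W - ori A V W * ori V B U = ori V U W * ori V B A := by
  simp only [ori_coords]; ring

theorem stmt9 (P : ℤ → ℝ × ℝ) (k N : ℤ) (hk : 3 ≤ k)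
    (hspiral : ∀ i ≥ N, 0 < ori (P i) (P (i+1)) (P (i+2)) ∧
      0 < ori (P i) (P (i+1)) (P (i+k)) ∧
      inTriangle (P i) (P (i+1)) (P (i+k)) (P (i+k+1))) :
    ∀ i > N, 0 < ori (P (i+2*k)) (P (i+k)) (P i) := by
  intro i hi
  set A := P i with hA
  set U := P (i + k - 1) with hU
  set V := P (i + k) with hV
  set B := P (i + k + 1) with hB
  set W := P (i + 2 * k - 1) with hW
  set Z := P (i + 2 * k) with hZ
  -- hypothesis at i - 1
  obtain ⟨-, hb₀, hint₀⟩ := hspiral (i - 1) (by omega)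
  simp only [show i - 1 + 1 = i from by ring, show i - 1 + k = i + k - 1 from by ring,
    show i + k - 1 + 1 = i + k from by ring] at hb₀ hint₀
  -- hypothesis at i
  obtain ⟨-, hb₁, hint₁⟩ := hspiral i (by omega)
  -- hypothesis at i + k - 1
  obtain ⟨ha₂, hb₂, hint₂⟩ := hspiral (i + k - 1) (by omega)
  simp only [show i + k - 1 + 1 = i + k from by ring,
    show i + k - 1 + 2 = i + k + 1 from by ring,
    show i + k - 1 + k = i + 2 * k - 1 from by ring,
    show i + 2 * k - 1 + 1 = i + 2 * k from by ring] at ha₂ hb₂ hint₂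
  -- hypothesis at i + k
  obtain ⟨-, hb₃, -⟩ := hspiral (i + k) (by omega)
  rw [show i + k + k = i + 2 * k from by ring] at hb₃
  -- fact 1 : 0 < ori A U V  (from the interior condition at i-1)
  have fact1 : 0 < ori A U V := by
    obtain ⟨l₁, l₂, l₃, h₁, h₂, h₃, hsum, hVeq⟩ := hint₀
    have hl₂ : l₂ = 1 - l₁ - l₃ := by linarith
    subst hl₂
    have hexp := ori_affine A U (P (i-1)) A U l₁ l₃
    rw [← hVeq] at hexp
    have e₂ : ori A U A = 0 := by simp only [ori_coords]; ring
    have e₃ : ori A U U = 0 := by simp only [ori_coords]; ring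
    have e₁ : ori A U (P (i-1)) = ori (P (i-1)) A U := by simp only [ori_coords]; ring
    rw [e₁, e₂, e₃] at hexp
    have hp : 0 < l₁ * ori (P (i - 1)) A U := mul_pos h₁.1 hb₀
    rw [hexp]; linarith
  -- fact 2 : 0 < ori V A B  (from the interior condition at i)
  have fact2 : 0 < ori V A B := by
    obtain ⟨l₁, l₂, l₃, h₁, h₂, h₃, hsum, hBeq⟩ := hint₁
    have hl₂ : l₂ = 1 - l₁ - l₃ := by linarith
    subst hl₂
    have hexp := ori_affine V A A (P (i+1)) V l₁ l₃
    rw [← hBeq] at hexp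
    have e₁ : ori V A A = 0 := by simp only [ori_coords]; ring
    have e₃ : ori V A V = 0 := by simp only [ori_coords]; ring
    have e₂ : ori V A (P (i+1)) = ori A (P (i+1)) V := by simp only [ori_coords]; ring
    rw [e₁, e₂, e₃] at hexp
    have hp : 0 < (1 - l₁ - l₃) * ori A (P (i + 1)) V := mul_pos (by linarith [h₂.1]) hb₁
    rw [hexp]; linarith
  -- abbreviations for the relevant orientation values
  have hfUneg : ori A V U < 0 := by
    have e : ori A V U = - ori A U V := by simp only [ori_coords]; ring
    rw [e]; linarith
  have hmUpos : 0 < ori V B U := by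
    have e : ori V B U = ori U V B := by simp only [ori_coords]; ring
    rw [e]; exact ha₂
  have hmAneg : ori V B A < 0 := by
    have e : ori V B A = - ori V A B := by simp only [ori_coords]; ring
    rw [e]; linarith
  have hqneg : ori V U W < 0 := by
    have e : ori V U W = - ori U V W := by simp only [ori_coords]; ring
    rw [e]; linarith
  have hidpos : 0 < ori A V U * ori V B W - ori A V W * ori V B U := by
    rw [ori_plucker A B U V W]; exact mul_pos_of_neg_of_neg hqneg hmAneg
  -- interior condition at i + k - 1 : Z is an interior point of triangle (U, V, W)
  obtain ⟨l₁, l₂, l₃, h₁, h₂, h₃, hsum, hZeq⟩ := hint₂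
  have hl₂ : l₂ = 1 - l₁ - l₃ := by linarith
  subst hl₂
  have hexpm := ori_affine V B U V W l₁ l₃
  rw [← hZeq] at hexpm
  have hexpf := ori_affine A V U V W l₁ l₃
  rw [← hZeq] at hexpf
  have eVV : ori V B V = 0 := by simp only [ori_coords]; ring
  have eAVV : ori A V V = 0 := by simp only [ori_coords]; ring
  rw [eVV, mul_zero, add_zero] at hexpm
  rw [eAVV, mul_zero, add_zero] at hexpf
  -- m(Z) > 0 from the hypothesis (b) at i + k
  have hmZ : 0 < l₁ * ori V B U + l₃ * ori V B W := by rw [← hexpm]; exact hb₃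
  -- conclude f(Z) < 0
  have hfZ : ori A V Z < 0 := by
    rw [hexpf]
    have key : (l₁ * ori A V U + l₃ * ori A V W) * ori V B U
        = ori A V U * (l₁ * ori V B U + l₃ * ori V B W)
          - l₃ * (ori A V U * ori V B W - ori A V W * ori V B U) := by ring
    have h7 : (l₁ * ori A V U + l₃ * ori A V W) * ori V B U < 0 := by
      rw [key]
      have t1 : ori A V U * (l₁ * ori V B U + l₃ * ori V B W) < 0 :=
        mul_neg_of_neg_of_pos hfUneg hmZ
      have t2 : 0 < l₃ * (ori A V U * ori V B W - ori A V W * ori V B U) :=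
        mul_pos h₃.1 hidpos
      linarith
    by_contra hcon
    push_neg at hcon
    have : 0 ≤ (l₁ * ori A V U + l₃ * ori A V W) * ori V B U :=
      mul_nonneg hcon (le_of_lt hmUpos)
    linarith
  have egoal : ori Z V A = - ori A V Z := by simp only [ori_coords]; ring
  rw [egoal]; linarith
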